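/- If M is a well-pointed topological monoid whose underlying space is a Dold space and π₀(M) is a group under the induced multiplication, then M is grouplike, i.e. M admits a continuous homotopy inversion ν : M → M with x·ν(x) and ν(x)·x both homotopic to the constant map at the unit. -/

import Mathlib

open Set Filter Topology Classical

noncomputable section

universe u

/-- The homotopy extension property for a map `i : A → X`. -/
def HasHEP {A : Type u} {X : Type u} [TopologicalSpace A] [TopologicalSpace X]
    (i : A → X) : Prop :=
  ∀ (Y : Type u) (_ : TopologicalSpace Y) (f : X → Y), Continuous f →
    ∀ H : unitInterval × A → Y, Continuous H → (∀ a, H (0, a) = f (i a)) →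
      ∃ G : unitInterval × X → Y, Continuous G ∧ (∀ x, G (0, x) = f x) ∧
        ∀ t a, G (t, i a) = H (t, a)

/-- A closed cofibration: a closed embedding with the homotopy extension property. -/
def IsClosedCofibration {A : Type u} {X : Type u} [TopologicalSpace A] [TopologicalSpace X]
    (i : A → X) : Prop :=
  Topology.IsClosedEmbedding i ∧ HasHEP i

/-- A topological monoid is well-pointed if the inclusion of its unit is a closed
cofibration. -/
def WellPointedMon (M : Type u) [Monoid M] [TopologicalSpace M] : Prop :=
  IsClosedCofibration (fun _ : PUnit.{u + 1} => (1 : M))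

/-- Two maps of spaces are homotopic. -/
def MapsHomotopic {X Y : Type*} [TopologicalSpace X] [TopologicalSpace Y]
    (f g : X → Y) : Prop :=
  ∃ H : C(unitInterval × X, Y), (∀ x, H (0, x) = f x) ∧ (∀ x, H (1, x) = g x)

/-- A Dold space: a space admitting a numerable cover (one carrying a subordinate
partition of unity) by subsets each of whose inclusions is nullhomotopic. -/
def DoldSpace (X : Type u) [TopologicalSpace X] : Prop :=
  ∃ (ι : Type u) (U : ι → Set X) (φ : PartitionOfUnity ι X Set.univ),
    φ.IsSubordinate U ∧
      ∀ i : ι, ∃ c : X, MapsHomotopic (fun u : U i => (u : X)) (fun _ => c)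

namespace DoldGL

variable {M : Type u} [TopologicalSpace M]

/-- Evaluate a path-like continuous map on a clamped real parameter. -/
def ee (γ : C(unitInterval, M)) (r : ℝ) : M := γ (Set.projIcc 0 1 zero_le_one r)

lemma continuous_ee :
    Continuous fun p : C(unitInterval, M) × ℝ => ee p.1 p.2 :=
  ContinuousEval.continuous_eval.comp
    (continuous_fst.prodMk ((continuous_projIcc (h := zero_le_one)).comp continuous_snd))

lemma ee_of_nonpos (γ : C(unitInterval, M)) {r : ℝ} (h : r ≤ 0) : ee γ r = γ 0 := by
  unfold ee
  rw [Set.projIcc_of_le_left _ h]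
  rfl

lemma ee_of_one_le (γ : C(unitInterval, M)) {r : ℝ} (h : 1 ≤ r) : ee γ r = γ 1 := by
  unfold ee
  rw [Set.projIcc_of_right_le _ h]
  rfl

lemma ee_coe (γ : C(unitInterval, M)) (u : unitInterval) : ee γ (↑u) = γ u := by
  unfold ee
  rw [Set.projIcc_of_mem _ u.2]

lemma ee_comp {α : Type*} [TopologicalSpace α] {γ : α → C(unitInterval, M)} {r : α → ℝ}
    (hγ : Continuous γ) (hr : Continuous r) : Continuous fun a => ee (γ a) (r a) :=
  continuous_ee.comp (hγ.prodMk hr)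

/-- Goodness: a pair `(y, γ)` with `γ` a path from `m x y` to `e`. -/
def Good (m : M → M → M) (e : M) (x : M) (w : M × C(unitInterval, M)) : Prop :=
  w.2 0 = m x w.1 ∧ w.2 1 = e

/-- Data for one patch: a nullhomotopy of the inclusion of `Vs` into `M`, together
with a `π₀`-inverse for the basepoint. -/
structure PatchData (m : M → M → M) (e : M) (Vs : Set M) : Type u where
  d : M
  c : M
  hh : C(ℝ × ↥Vs, M)
  hh0 : ∀ (r : ℝ), r ≤ 0 → ∀ xv : ↥Vs, hh (r, xv) = ↑xv
  hh1 : ∀ (r : ℝ), 1 ≤ r → ∀ xv : ↥Vs, hh (r, xv) = c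
  p : Path (m c d) e
  q : Path (m d c) e

/-- clamp to `[0,1]`. -/
def mcl (r : ℝ) : ℝ := max 0 (min 1 r)

lemma mcl_nonneg (r : ℝ) : 0 ≤ mcl r := le_max_left _ _

lemma mcl_le_one (r : ℝ) : mcl r ≤ 1 :=
  max_le zero_le_one (min_le_left _ _)

lemma continuous_mcl : Continuous mcl :=
  continuous_const.max (continuous_const.min continuous_id)

lemma mcl_of_nonpos {r : ℝ} (h : r ≤ 0) : mcl r = 0 :=
  max_eq_left (le_trans (min_le_right _ _) h)

lemma mcl_of_one_le {r : ℝ} (h : 1 ≤ r) : mcl r = 1 := by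
  rw [mcl, min_eq_left h, max_eq_right zero_le_one]

lemma mcl_of_mem {r : ℝ} (h0 : 0 ≤ r) (h1 : r ≤ 1) : mcl r = r := by
  rw [mcl, min_eq_right h1, max_eq_right h0]

/-- clamp to `[0,1/3]`. -/
def mc3 (r : ℝ) : ℝ := max 0 (min 3⁻¹ r)

lemma mc3_nonneg (r : ℝ) : 0 ≤ mc3 r := le_max_left _ _

lemma mc3_le_third (r : ℝ) : mc3 r ≤ 3⁻¹ :=
  max_le (by norm_num) (min_le_left _ _)

lemma continuous_mc3 : Continuous mc3 :=
  continuous_const.max (continuous_const.min continuous_id)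

lemma mc3_of_nonpos {r : ℝ} (h : r ≤ 0) : mc3 r = 0 :=
  max_eq_left (le_trans (min_le_right _ _) h)

lemma mc3_of_third_le {r : ℝ} (h : 3⁻¹ ≤ r) : mc3 r = 3⁻¹ := by
  rw [mc3, min_eq_left h]; norm_num

section Patch

variable (m : M → M → M) (e : M) {Vs : Set M}

lemma contm2 {α : Type*} [TopologicalSpace α]
    (hm : Continuous fun p : M × M => m p.1 p.2) {f g : α → M}
    (hf : Continuous f) (hg : Continuous g) : Continuous fun a => m (f a) (g a) :=
  hm.comp (hf.prodMk hg)

/-- The path `A : m d x ⇝ e`. -/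
def Af (P : PatchData m e Vs) (r : ℝ) (xv : ↥Vs) : M :=
  if r ≤ (2:ℝ)⁻¹ then m P.d (P.hh (2*r, xv)) else P.q.extend (2*r - 1)

/-- The path `B : m x d ⇝ e`. -/
def Bf (P : PatchData m e Vs) (r : ℝ) (xv : ↥Vs) : M :=
  if r ≤ (2:ℝ)⁻¹ then m (P.hh (2*r, xv)) P.d else P.p.extend (2*r - 1)

variable (P : PatchData m e Vs)

lemma Af_of_nonpos {r : ℝ} (h : r ≤ 0) (xv : ↥Vs) : Af m e P r xv = m P.d ↑xv := by
  rw [Af, if_pos (le_trans h (by norm_num)), P.hh0 (2*r) (by linarith)]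

lemma Af_of_one_le {r : ℝ} (h : 1 ≤ r) (xv : ↥Vs) : Af m e P r xv = e := by
  rw [Af, if_neg (by intro hc; linarith [hc]), Path.extend_of_one_le _ (by linarith)]

lemma Bf_of_nonpos {r : ℝ} (h : r ≤ 0) (xv : ↥Vs) : Bf m e P r xv = m ↑xv P.d := by
  rw [Bf, if_pos (le_trans h (by norm_num)), P.hh0 (2*r) (by linarith)]

lemma Bf_of_one_le {r : ℝ} (h : 1 ≤ r) (xv : ↥Vs) : Bf m e P r xv = e := by
  rw [Bf, if_neg (by intro hc; linarith [hc]), Path.extend_of_one_le _ (by linarith)]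

variable {α : Type*} [TopologicalSpace α]

lemma contAf (hm : Continuous fun p : M × M => m p.1 p.2)
    {r : α → ℝ} {x : α → ↥Vs} (hr : Continuous r) (hx : Continuous x) :
    Continuous fun a => Af m e P (r a) (x a) := by
  apply Continuous.if_le
  · exact contm2 m hm continuous_const
      (P.hh.continuous.comp ((continuous_const.mul hr).prodMk hx))
  · exact P.q.continuous_extend.comp ((continuous_const.mul hr).sub continuous_const)
  · exact hr
  · exact continuous_const
  · intro a ha
    rw [ha, P.hh1 (2*(2:ℝ)⁻¹) (by norm_num)]
    have : 2*(2:ℝ)⁻¹ - 1 = 0 := by norm_num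
    rw [this, Path.extend_zero]

lemma contBf (hm : Continuous fun p : M × M => m p.1 p.2)
    {r : α → ℝ} {x : α → ↥Vs} (hr : Continuous r) (hx : Continuous x) :
    Continuous fun a => Bf m e P (r a) (x a) := by
  apply Continuous.if_le
  · exact contm2 m hm
      (P.hh.continuous.comp ((continuous_const.mul hr).prodMk hx)) continuous_const
  · exact P.p.continuous_extend.comp ((continuous_const.mul hr).sub continuous_const)
  · exact hr
  · exact continuous_const
  · intro a ha
    rw [ha, P.hh1 (2*(2:ℝ)⁻¹) (by norm_num)]
    have : 2*(2:ℝ)⁻¹ - 1 = 0 := by norm_num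
    rw [this, Path.extend_zero]

/-- Slide path `Γ : y ⇝ d` (through `(d x) y` and `d γ`). -/
def Ga (P : PatchData m e Vs) (s : ℝ) (xv : ↥Vs) (y : M) (γ : C(unitInterval, M)) : M :=
  if s ≤ (2:ℝ)⁻¹ then m (Af m e P (1 - 2*s) xv) y else m P.d (ee γ (2*s - 1))

lemma Ga_of_nonpos (hone : ∀ a, m e a = a) {s : ℝ} (h : s ≤ 0) (xv y γ) :
    Ga m e P s xv y γ = y := by
  rw [Ga, if_pos (le_trans h (by norm_num)), Af_of_one_le m e P (by linarith), hone]

lemma Ga_of_one_le {s : ℝ} (h : 1 ≤ s) (xv y γ) :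
    Ga m e P s xv y γ = m P.d (γ 1) := by
  rw [Ga, if_neg (by intro hc; linarith), ee_of_one_le _ (by linarith)]

lemma contGa (hm : Continuous fun p : M × M => m p.1 p.2)
    (hassoc : ∀ a b c, m (m a b) c = m a (m b c))
    {s : α → ℝ} {x : α → ↥Vs} {y : α → M} {γ : α → C(unitInterval, M)}
    (hs : Continuous s) (hx : Continuous x) (hy : Continuous y) (hγ : Continuous γ)
    (hg0 : ∀ a, (γ a) 0 = m ↑(x a) (y a)) :
    Continuous fun a => Ga m e P (s a) (x a) (y a) (γ a) := by
  apply Continuous.if_le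
  · exact contm2 m hm
      (contAf m e P hm (continuous_const.sub (continuous_const.mul hs)) hx) hy
  · exact contm2 m hm continuous_const
      (ee_comp hγ ((continuous_const.mul hs).sub continuous_const))
  · exact hs
  · exact continuous_const
  · intro a ha
    rw [ha]
    have h1 : 1 - 2*(2:ℝ)⁻¹ = 0 := by norm_num
    have h2 : 2*(2:ℝ)⁻¹ - 1 = 0 := by norm_num
    rw [h1, h2, Af_of_nonpos m e P le_rfl, ee_of_nonpos _ le_rfl, hg0, hassoc]

/-- The shrinking excursion family `ẽ^m`. -/
def Et (P : PatchData m e Vs) (mm v : ℝ) (xv : ↥Vs) (y : M) (γ : C(unitInterval, M)) : M :=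
  if v ≤ (mcl mm)/2 then m (Af m e P (2*v) xv) y
  else if v ≤ 3*(mcl mm)/4 then m (Af m e P (3*(mcl mm) - 4*v) xv) y
  else m P.d (ee γ ((v - 3*(mcl mm)/4)/(1 - 3*(mcl mm)/4)))

lemma Et_denom_pos (mm : ℝ) : (0:ℝ) < 1 - 3*(mcl mm)/4 := by
  have := mcl_le_one mm; linarith

lemma contEt (hm : Continuous fun p : M × M => m p.1 p.2)
    (hassoc : ∀ a b c, m (m a b) c = m a (m b c))
    {mm v : α → ℝ} {x : α → ↥Vs} {y : α → M} {γ : α → C(unitInterval, M)}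
    (hmm : Continuous mm) (hv : Continuous v) (hx : Continuous x) (hy : Continuous y)
    (hγ : Continuous γ)
    (hg0 : ∀ a, (γ a) 0 = m ↑(x a) (y a)) :
    Continuous fun a => Et m e P (mm a) (v a) (x a) (y a) (γ a) := by
  have hmcl : Continuous fun a => mcl (mm a) := continuous_mcl.comp hmm
  apply Continuous.if_le
  · exact contm2 m hm (contAf m e P hm (continuous_const.mul hv) hx) hy
  case hf => exact hv
  case hg => exact hmcl.div_const 2
  · apply Continuous.if_le
    · exact contm2 m hm
        (contAf m e P hm ((continuous_const.mul hmcl).sub (continuous_const.mul hv)) hx) hy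
    · refine contm2 m hm continuous_const (ee_comp hγ ?_)
      refine Continuous.div (hv.sub ((continuous_const.mul hmcl).div_const 4))
        (continuous_const.sub ((continuous_const.mul hmcl).div_const 4)) ?_
      intro a; exact ne_of_gt (Et_denom_pos (mm a))
    · exact hv
    · exact (continuous_const.mul hmcl).div_const 4
    · intro a ha
      rw [ha]
      have h1 : 3*(mcl (mm a)) - 4*(3*(mcl (mm a))/4) = 0 := by ring
      have h2 : (3*(mcl (mm a))/4 - 3*(mcl (mm a))/4) / (1 - 3*(mcl (mm a))/4) = 0 := by
        rw [sub_self, zero_div]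
      rw [h1, h2, Af_of_nonpos m e P le_rfl, ee_of_nonpos _ le_rfl, hg0, hassoc]
  · intro a ha
    rw [ha]
    have h1 : 2*((mcl (mm a))/2) = mcl (mm a) := by ring
    have h2 : 3*(mcl (mm a)) - 4*((mcl (mm a))/2) = mcl (mm a) := by ring
    rw [if_pos, h1, h2]
    have := mcl_nonneg (mm a); linarith

/-- The witness family for the slide, `ε_s`. -/
def Ep (P : PatchData m e Vs) (s v : ℝ) (xv : ↥Vs) (y : M) (γ : C(unitInterval, M)) : M :=
  if v ≤ (2:ℝ)⁻¹ then m (Af m e P (2*v) xv) (Ga m e P (mcl s) xv y γ)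
  else Ga m e P (mcl s + (2*v - 1)*(1 - mcl s)) xv y γ

lemma contEp (hm : Continuous fun p : M × M => m p.1 p.2)
    (hassoc : ∀ a b c, m (m a b) c = m a (m b c))
    (hone : ∀ a, m e a = a)
    {s v : α → ℝ} {x : α → ↥Vs} {y : α → M} {γ : α → C(unitInterval, M)}
    (hs : Continuous s) (hv : Continuous v) (hx : Continuous x) (hy : Continuous y)
    (hγ : Continuous γ)
    (hg0 : ∀ a, (γ a) 0 = m ↑(x a) (y a)) :
    Continuous fun a => Ep m e P (s a) (v a) (x a) (y a) (γ a) := by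
  have hmcl : Continuous fun a => mcl (s a) := continuous_mcl.comp hs
  apply Continuous.if_le
  · exact contm2 m hm (contAf m e P hm (continuous_const.mul hv) hx)
      (contGa m e P hm hassoc hmcl hx hy hγ hg0)
  · refine contGa m e P hm hassoc ?_ hx hy hγ hg0
    exact hmcl.add (((continuous_const.mul hv).sub continuous_const).mul
      (continuous_const.sub hmcl))
  · exact hv
  · exact continuous_const
  · intro a ha
    rw [ha]
    have h1 : 2*(2:ℝ)⁻¹ = 1 := by norm_num
    have h2 : mcl (s a) + (2*(2:ℝ)⁻¹ - 1)*(1 - mcl (s a)) = mcl (s a) := by norm_num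
    rw [h2, h1, Af_of_one_le m e P le_rfl, hone]

/-- Stage I of the contraction: wrapping the witness. -/
def W1f (P : PatchData m e Vs) (t u : ℝ) (xv : ↥Vs) (y : M) (γ : C(unitInterval, M)) : M :=
  if u ≤ mc3 t then m (Bf m e P (1 - 3*u) xv) (m ↑xv y)
  else if u ≤ 1 - mc3 t then
    m (Bf m e P (1 - 3*(mc3 t)) xv) (ee γ ((u - mc3 t)/(1 - 2*(mc3 t))))
  else Bf m e P (3*u - 2) xv

/-- Stage II: shrinking the inner excursion. -/
def W2f (P : PatchData m e Vs) (t u : ℝ) (xv : ↥Vs) (y : M) (γ : C(unitInterval, M)) : M :=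
  if u ≤ (3:ℝ)⁻¹ then m (Bf m e P (1 - 3*u) xv) (m ↑xv y)
  else if u ≤ 2/3 then m ↑xv (Et m e P (3*t - 1) (3*u - 1) xv y γ)
  else Bf m e P (3*u - 2) xv

/-- Stage III: the slide. -/
def W3f (P : PatchData m e Vs) (t u : ℝ) (xv : ↥Vs) (y : M) (γ : C(unitInterval, M)) : M :=
  if u ≤ (3:ℝ)⁻¹ then
    m (Bf m e P (1 - 3*u) xv) (m ↑xv (Ga m e P (mcl (3*t - 2)) xv y γ))
  else if u ≤ 2/3 then m ↑xv (Ep m e P (3*t - 2) (3*u - 1) xv y γ)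
  else Bf m e P (3*u - 2) xv

/-- The full contraction homotopy of witnesses. -/
def Wf (P : PatchData m e Vs) (t u : ℝ) (xv : ↥Vs) (y : M) (γ : C(unitInterval, M)) : M :=
  if t ≤ (3:ℝ)⁻¹ then W1f m e P t u xv y γ
  else if t ≤ 2/3 then W2f m e P t u xv y γ
  else W3f m e P t u xv y γ

/-- The corresponding motion of the `y`-component. -/
def Zf (P : PatchData m e Vs) (t : ℝ) (xv : ↥Vs) (y : M) (γ : C(unitInterval, M)) : M :=
  if t ≤ 2/3 then y else Ga m e P (mcl (3*t - 2)) xv y γ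

section WCont

variable (hm : Continuous fun p : M × M => m p.1 p.2)
    (hassoc : ∀ a b c, m (m a b) c = m a (m b c))
    (hone : ∀ a, m e a = a) (honer : ∀ a, m a e = a)
    {t u : α → ℝ} {x : α → ↥Vs} {y : α → M} {γ : α → C(unitInterval, M)}
    (ht : Continuous t) (hu : Continuous u) (hx : Continuous x) (hy : Continuous y)
    (hγ : Continuous γ)
    (hg0 : ∀ a, (γ a) 0 = m ↑(x a) (y a)) (hg1 : ∀ a, (γ a) 1 = e)

include hm honer hg0 hg1 ht hu hx hy hγ in
lemma contW1 : Continuous fun a => W1f m e P (t a) (u a) (x a) (y a) (γ a) := by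
  have hm3 : Continuous fun a => mc3 (t a) := continuous_mc3.comp ht
  have hden : ∀ a, (0:ℝ) < 1 - 2*(mc3 (t a)) := by
    intro a; have := mc3_le_third (t a); norm_num at this ⊢; linarith
  apply Continuous.if_le
  · exact contm2 m hm
      (contBf m e P hm (continuous_const.sub (continuous_const.mul hu)) hx)
      (contm2 m hm (continuous_subtype_val.comp hx) hy)
  · apply Continuous.if_le
    · refine contm2 m hm
        (contBf m e P hm (continuous_const.sub (continuous_const.mul hm3)) hx)
        (ee_comp hγ ?_)
      exact (hu.sub hm3).div (continuous_const.sub (continuous_const.mul hm3))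
        (fun a => ne_of_gt (hden a))
    · exact contBf m e P hm ((continuous_const.mul hu).sub continuous_const) hx
    · exact hu
    · exact continuous_const.sub hm3
    · intro a ha
      rw [ha]
      have h1 : (1 - mc3 (t a) - mc3 (t a))/(1 - 2*(mc3 (t a))) = 1 := by
        rw [show (1 - mc3 (t a) - mc3 (t a)) = 1 - 2*(mc3 (t a)) by ring]
        exact div_self (ne_of_gt (hden a))
      have h2 : 3*(1 - mc3 (t a)) - 2 = 1 - 3*(mc3 (t a)) := by ring
      rw [h1, h2, ee_of_one_le _ le_rfl, hg1, honer]
  · exact hu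
  · exact hm3
  · intro a ha
    rw [ha, if_pos]
    · have h1 : (mc3 (t a) - mc3 (t a))/(1 - 2*(mc3 (t a))) = 0 := by
        rw [sub_self, zero_div]
      rw [h1, ee_of_nonpos _ le_rfl, hg0]
    · have := mc3_le_third (t a); norm_num at this ⊢; linarith

include hm hassoc honer hg0 hg1 ht hu hx hy hγ in
lemma contW2 : Continuous fun a => W2f m e P (t a) (u a) (x a) (y a) (γ a) := by
  apply Continuous.if_le
  · exact contm2 m hm
      (contBf m e P hm (continuous_const.sub (continuous_const.mul hu)) hx)
      (contm2 m hm (continuous_subtype_val.comp hx) hy)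
  · apply Continuous.if_le
    · refine contm2 m hm (continuous_subtype_val.comp hx)
        (contEt m e P hm hassoc ((continuous_const.mul ht).sub continuous_const)
          ((continuous_const.mul hu).sub continuous_const) hx hy hγ hg0)
    · exact contBf m e P hm ((continuous_const.mul hu).sub continuous_const) hx
    · exact hu
    · exact continuous_const
    · intro a ha
      rw [ha]
      have hv1 : 3*(2/3 : ℝ) - 1 = 1 := by norm_num
      have hu1 : 3*(2/3 : ℝ) - 2 = 0 := by norm_num
      rw [hv1, hu1, Bf_of_nonpos m e P le_rfl]
      have hmle := mcl_le_one (3*(t a) - 1)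
      have hmge := mcl_nonneg (3*(t a) - 1)
      rw [Et, if_neg (by linarith), if_neg (by linarith)]
      have harg : ((1:ℝ) - 3*(mcl (3*(t a) - 1))/4)/(1 - 3*(mcl (3*(t a) - 1))/4) = 1 :=
        div_self (ne_of_gt (Et_denom_pos _))
      rw [ee_of_one_le _ (le_of_eq harg.symm), hg1, honer]
  · exact hu
  · exact continuous_const
  · intro a ha
    rw [ha]
    have hv0 : 3*(3:ℝ)⁻¹ - 1 = 0 := by norm_num
    have hb0 : 1 - 3*(3:ℝ)⁻¹ = 0 := by norm_num
    rw [hv0, hb0, Bf_of_nonpos m e P le_rfl]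
    have hc1 : (0:ℝ) ≤ mcl (3*(t a) - 1)/2 := by
      have := mcl_nonneg (3*(t a) - 1); linarith
    rw [Et, if_pos hc1, show (2:ℝ)*0 = 0 by norm_num,
      Af_of_nonpos m e P le_rfl, hassoc, hassoc,
      if_pos (show (3:ℝ)⁻¹ ≤ 2/3 by norm_num)]

include hm hassoc hone honer hg0 hg1 ht hu hx hy hγ in
lemma contW3 : Continuous fun a => W3f m e P (t a) (u a) (x a) (y a) (γ a) := by
  have hmc : Continuous fun a => mcl (3*(t a) - 2) :=
    continuous_mcl.comp ((continuous_const.mul ht).sub continuous_const)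
  have hxc : Continuous fun a => (↑(x a) : M) := continuous_subtype_val.comp hx
  have hGa : Continuous fun a => Ga m e P (mcl (3*(t a) - 2)) (x a) (y a) (γ a) :=
    contGa m e P hm hassoc hmc hx hy hγ hg0
  apply Continuous.if_le
  · exact contm2 m hm
      (contBf m e P hm (continuous_const.sub (continuous_const.mul hu)) hx)
      (contm2 m hm hxc hGa)
  · apply Continuous.if_le
    · exact contm2 m hm hxc
        (contEp m e P hm hassoc hone ((continuous_const.mul ht).sub continuous_const)
          ((continuous_const.mul hu).sub continuous_const) hx hy hγ hg0)
    · exact contBf m e P hm ((continuous_const.mul hu).sub continuous_const) hx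
    · exact hu
    · exact continuous_const
    · intro a ha
      rw [ha]
      have hv1 : 3*(2/3 : ℝ) - 1 = 1 := by norm_num
      have hu1 : 3*(2/3 : ℝ) - 2 = 0 := by norm_num
      rw [hv1, hu1, Bf_of_nonpos m e P le_rfl]
      rw [Ep, if_neg (by norm_num)]
      have harg : mcl (3*(t a) - 2) + (2*(1:ℝ) - 1)*(1 - mcl (3*(t a) - 2)) = 1 := by ring
      rw [harg, Ga_of_one_le m e P le_rfl, hg1, honer]
  · exact hu
  · exact continuous_const
  · intro a ha
    rw [ha]
    have hb0 : 1 - 3*(3:ℝ)⁻¹ = 0 := by norm_num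
    have hv0 : 3*(3:ℝ)⁻¹ - 1 = 0 := by norm_num
    rw [hb0, hv0, Bf_of_nonpos m e P le_rfl]
    have hc1 : (0:ℝ) ≤ (2:ℝ)⁻¹ := by norm_num
    rw [Ep, if_pos hc1, show (2:ℝ)*0 = 0 by norm_num,
      Af_of_nonpos m e P le_rfl, hassoc, hassoc,
      if_pos (show (3:ℝ)⁻¹ ≤ 2/3 by norm_num)]

include hm hassoc hone honer hg0 hg1 ht hu hx hy hγ in
lemma contWf : Continuous fun a => Wf m e P (t a) (u a) (x a) (y a) (γ a) := by
  apply Continuous.if_le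
  · exact contW1 m e P hm honer ht hu hx hy hγ hg0 hg1
  · apply Continuous.if_le
    · exact contW2 m e P hm hassoc honer ht hu hx hy hγ hg0 hg1
    · exact contW3 m e P hm hassoc hone honer ht hu hx hy hγ hg0 hg1
    · exact ht
    · exact continuous_const
    · intro a ha
      -- seam t = 2/3 : stage II (m' = 1) agrees with stage III (s = 0)
      rw [ha]
      have hm1 : mcl (3*(2/3 : ℝ) - 1) = 1 := mcl_of_one_le (by norm_num)
      have hs0 : mcl (3*(2/3 : ℝ) - 2) = 0 := mcl_of_nonpos (by norm_num)
      have hGa0 : Ga m e P (mcl (3*(2/3 : ℝ) - 2)) (x a) (y a) (γ a) = y a := by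
        rw [hs0]; exact Ga_of_nonpos m e P hone le_rfl _ _ _
      rw [W2f, W3f, hGa0]
      by_cases h1 : u a ≤ (3:ℝ)⁻¹
      · rw [if_pos h1, if_pos h1]
      · rw [if_neg h1, if_neg h1]
        by_cases h2 : u a ≤ 2/3
        · rw [if_pos h2, if_pos h2]
          congr 1
          rw [Et, Ep, hm1]
          by_cases h3 : 3*(u a) - 1 ≤ (2:ℝ)⁻¹
          · rw [if_pos (by linarith : 3*(u a) - 1 ≤ (1:ℝ)/2), if_pos h3, hs0,
              Ga_of_nonpos m e P hone le_rfl]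
          · rw [if_neg (by intro hc; apply h3; linarith), if_neg h3]
            by_cases h4 : 3*(u a) - 1 ≤ 3*(1:ℝ)/4
            · rw [if_pos h4, hs0]
              rw [Ga, if_pos (by linarith)]
              congr 2
              ring
            · rw [if_neg h4, hs0]
              rw [Ga, if_neg (by intro hc; apply h4; linarith)]
              congr 2
              rw [show (1:ℝ) - 3*1/4 = 4⁻¹ by norm_num]
              field_simp
              ring
        · rw [if_neg h2, if_neg h2]
  · exact ht
  · exact continuous_const
  · intro a ha
    -- seam t = 1/3 : stage I (w = 0) agrees with stage II (m' = 0)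
    rw [ha, if_pos (show (3:ℝ)⁻¹ ≤ 2/3 by norm_num)]
    have hm3 : mc3 ((3:ℝ)⁻¹) = 3⁻¹ := mc3_of_third_le le_rfl
    have hm0 : mcl (3*((3:ℝ)⁻¹) - 1) = 0 := mcl_of_nonpos (by norm_num)
    rw [W1f, W2f, hm3]
    by_cases h1 : u a ≤ (3:ℝ)⁻¹
    · rw [if_pos h1, if_pos h1]
    · rw [if_neg h1, if_neg h1]
      by_cases h2 : u a ≤ 2/3
      · have hc2 : u a ≤ 1 - (3:ℝ)⁻¹ := by
          have : (1:ℝ) - (3:ℝ)⁻¹ = 2/3 := by norm_num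
          linarith
        rw [if_pos hc2, if_pos h2]
        have hn1 : ¬ (3*(u a) - 1 ≤ mcl (3*((3:ℝ)⁻¹) - 1)/2) := by
          rw [hm0]; intro hc; norm_num at hc; linarith
        have hn2 : ¬ (3*(u a) - 1 ≤ 3*(mcl (3*((3:ℝ)⁻¹) - 1))/4) := by
          rw [hm0]; intro hc; norm_num at hc; linarith
        rw [Et, if_neg hn1, if_neg hn2, hm0]
        rw [show (1:ℝ) - 3*(3:ℝ)⁻¹ = 0 by norm_num, Bf_of_nonpos m e P le_rfl]
        rw [show ((u a) - 3⁻¹)/(1 - 2*(3:ℝ)⁻¹) = 3*(u a) - 1 by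
          rw [show (1:ℝ) - 2*(3:ℝ)⁻¹ = 3⁻¹ by norm_num]; field_simp]
        rw [show ((3*(u a) - 1) - 3*0/4)/(1 - 3*0/4) = 3*(u a) - 1 by norm_num]
        rw [hassoc]
      · have hc2 : ¬ (u a ≤ 1 - (3:ℝ)⁻¹) := by
          have : (1:ℝ) - (3:ℝ)⁻¹ = 2/3 := by norm_num
          rw [this]; exact h2
        rw [if_neg hc2, if_neg h2]

end WCont

/-- The terminal witness (the canonical local section at `xv`). -/
def Wsf (P : PatchData m e Vs) (u : ℝ) (xv : ↥Vs) : M :=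
  if u ≤ (3:ℝ)⁻¹ then m (Bf m e P (1 - 3*u) xv) (m ↑xv P.d)
  else if u ≤ (2:ℝ)⁻¹ then m ↑xv (m (Af m e P (2*(3*u - 1)) xv) P.d)
  else if u ≤ 2/3 then m ↑xv (m P.d e)
  else Bf m e P (3*u - 2) xv

section WsSec

variable (hm : Continuous fun p : M × M => m p.1 p.2)
    (hassoc : ∀ a b c, m (m a b) c = m a (m b c))
    (hone : ∀ a, m e a = a) (honer : ∀ a, m a e = a)

include hm hassoc hone honer in
lemma contWs {u : α → ℝ} {x : α → ↥Vs} (hu : Continuous u) (hx : Continuous x) :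
    Continuous fun a => Wsf m e P (u a) (x a) := by
  have hxc : Continuous fun a => (↑(x a) : M) := continuous_subtype_val.comp hx
  apply Continuous.if_le
  · exact contm2 m hm
      (contBf m e P hm (continuous_const.sub (continuous_const.mul hu)) hx)
      (contm2 m hm hxc continuous_const)
  · apply Continuous.if_le
    · exact contm2 m hm hxc (contm2 m hm
        (contAf m e P hm (continuous_const.mul ((continuous_const.mul hu).sub
          continuous_const)) hx) continuous_const)
    · apply Continuous.if_le
      · exact contm2 m hm hxc continuous_const
      · exact contBf m e P hm ((continuous_const.mul hu).sub continuous_const) hx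
      · exact hu
      · exact continuous_const
      · intro a ha
        rw [ha, show 3*(2/3:ℝ) - 2 = 0 by norm_num, Bf_of_nonpos m e P le_rfl, honer]
    · exact hu
    · exact continuous_const
    · intro a ha
      rw [ha, show 2*(3*(2:ℝ)⁻¹ - 1) = 1 by norm_num, Af_of_one_le m e P le_rfl,
        hone, if_pos (show (2:ℝ)⁻¹ ≤ 2/3 by norm_num), honer]
  · exact hu
  · exact continuous_const
  · intro a ha
    rw [ha, show (1:ℝ) - 3*(3:ℝ)⁻¹ = 0 by norm_num, Bf_of_nonpos m e P le_rfl,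
      show 2*(3*(3:ℝ)⁻¹ - 1) = 0 by norm_num, Af_of_nonpos m e P le_rfl,
      if_pos (show (3:ℝ)⁻¹ ≤ 2⁻¹ by norm_num), hassoc, hassoc]

/-- The canonical local section. -/
def sPt (xv : ↥Vs) : M × C(unitInterval, M) :=
  (P.d, (ContinuousMap.curry
    ⟨fun q : ↥Vs × unitInterval => Wsf m e P ↑q.2 q.1,
      contWs m e P hm hassoc hone honer continuous_subtype_val.snd' continuous_fst⟩) xv)

include hm hassoc hone honer in
lemma cont_sPt : Continuous (sPt m e P hm hassoc hone honer) :=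
  continuous_const.prodMk (ContinuousMap.continuous _)

lemma sPt_good (xv : ↥Vs) : Good m e ↑xv (sPt m e P hm hassoc hone honer xv) := by
  constructor
  · show Wsf m e P ↑(0 : unitInterval) xv = m ↑xv P.d
    rw [show ((0 : unitInterval) : ℝ) = 0 from rfl, Wsf,
      if_pos (show (0:ℝ) ≤ 3⁻¹ by norm_num),
      show (1:ℝ) - 3*0 = 1 by norm_num, Bf_of_one_le m e P le_rfl, hone]
  · show Wsf m e P ↑(1 : unitInterval) xv = e
    rw [show ((1 : unitInterval) : ℝ) = 1 from rfl, Wsf,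
      if_neg (by norm_num), if_neg (by norm_num), if_neg (by norm_num),
      show 3*(1:ℝ) - 2 = 1 by norm_num, Bf_of_one_le m e P le_rfl]

end WsSec

section WVals

variable {P} {xv : ↥Vs} {y : M} {γ : C(unitInterval, M)}
variable (hassoc : ∀ a b c, m (m a b) c = m a (m b c))
    (hone : ∀ a, m e a = a) (honer : ∀ a, m a e = a)
    (hg0 : γ 0 = m ↑xv y) (hg1 : γ 1 = e)

include hone in
lemma Wf_u0 {t : ℝ} (ht : 0 ≤ t) :
    Wf m e P t 0 xv y γ = m ↑xv (Zf m e P t xv y γ) := by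
  rw [Wf, Zf]
  by_cases h1 : t ≤ (3:ℝ)⁻¹
  · rw [if_pos h1, if_pos (by linarith : t ≤ 2/3), W1f, if_pos (mc3_nonneg t),
      show (1:ℝ) - 3*0 = 1 by norm_num, Bf_of_one_le m e P le_rfl, hone]
  · rw [if_neg h1]
    by_cases h2 : t ≤ 2/3
    · rw [if_pos h2, if_pos h2, W2f, if_pos (by norm_num : (0:ℝ) ≤ 3⁻¹),
        show (1:ℝ) - 3*0 = 1 by norm_num, Bf_of_one_le m e P le_rfl, hone]
    · rw [if_neg h2, if_neg h2, W3f, if_pos (by norm_num : (0:ℝ) ≤ 3⁻¹),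
        show (1:ℝ) - 3*0 = 1 by norm_num, Bf_of_one_le m e P le_rfl, hone]

include hone hg1 in
lemma Wf_u1 {t : ℝ} : Wf m e P t 1 xv y γ = e := by
  rw [Wf]
  by_cases h1 : t ≤ (3:ℝ)⁻¹
  · rw [if_pos h1, W1f, if_neg (by have := mc3_le_third t; intro hc; norm_num at *; linarith)]
    by_cases h2 : (1:ℝ) ≤ 1 - mc3 t
    · have h0 : mc3 t = 0 := le_antisymm (by linarith) (mc3_nonneg t)
      rw [if_pos h2, h0, show (1:ℝ) - 3*0 = 1 by norm_num, Bf_of_one_le m e P le_rfl,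
        hone]
      have : ((1:ℝ) - 0)/(1 - 2*0) = 1 := by norm_num
      rw [this, ee_of_one_le _ le_rfl, hg1]
    · rw [if_neg h2, show 3*(1:ℝ) - 2 = 1 by norm_num, Bf_of_one_le m e P le_rfl]
  · rw [if_neg h1]
    by_cases h2 : t ≤ 2/3
    · rw [if_pos h2, W2f, if_neg (by norm_num), if_neg (by norm_num),
        show 3*(1:ℝ) - 2 = 1 by norm_num, Bf_of_one_le m e P le_rfl]
    · rw [if_neg h2, W3f, if_neg (by norm_num), if_neg (by norm_num),
        show 3*(1:ℝ) - 2 = 1 by norm_num, Bf_of_one_le m e P le_rfl]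

include hone hg0 in
lemma Wf_t0 {t : ℝ} (ht : t ≤ 0) (u : unitInterval) :
    Wf m e P t ↑u xv y γ = γ u := by
  have h0 : mc3 t = 0 := mc3_of_nonpos ht
  rw [Wf, if_pos (by linarith [mc3_nonneg t] : t ≤ (3:ℝ)⁻¹), W1f, h0]
  by_cases h1 : (u:ℝ) ≤ 0
  · have hu0 : u = 0 := Subtype.ext (le_antisymm h1 u.2.1)
    rw [if_pos h1, hu0, show ((0 : unitInterval) : ℝ) = 0 from rfl,
      show (1:ℝ) - 3*0 = 1 by norm_num, Bf_of_one_le m e P le_rfl, hone, hg0]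
  · rw [if_neg h1, if_pos (by linarith [u.2.2] : (u:ℝ) ≤ 1 - 0),
      show (1:ℝ) - 3*0 = 1 by norm_num, Bf_of_one_le m e P le_rfl, hone]
    have : ((u:ℝ) - 0)/(1 - 2*0) = (u:ℝ) := by norm_num
    rw [this, ee_coe]

include honer hg1 in
lemma Wf_t1 {t : ℝ} (ht : 1 ≤ t) (u : unitInterval) :
    Wf m e P t ↑u xv y γ = Wsf m e P ↑u xv := by
  have hscl : mcl (3*t - 2) = 1 := mcl_of_one_le (by linarith)
  have hGa1 : Ga m e P (mcl (3*t - 2)) xv y γ = P.d := by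
    rw [hscl, Ga_of_one_le m e P le_rfl, hg1, honer]
  rw [Wf, if_neg (by intro hc; norm_num at hc; linarith),
    if_neg (by intro hc; norm_num at hc; linarith), W3f, Wsf]
  by_cases h1 : (u:ℝ) ≤ (3:ℝ)⁻¹
  · rw [if_pos h1, if_pos h1, hGa1]
  · rw [if_neg h1, if_neg h1]
    by_cases h2 : (u:ℝ) ≤ 2/3
    · rw [if_pos h2, Ep, hscl]
      by_cases h3 : 3*(u:ℝ) - 1 ≤ (2:ℝ)⁻¹
      · rw [if_pos h3, if_pos (by linarith : (u:ℝ) ≤ (2:ℝ)⁻¹),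
          Ga_of_one_le m e P le_rfl, hg1, honer]
      · rw [if_neg h3, if_neg (show ¬ ((u:ℝ) ≤ (2:ℝ)⁻¹) by intro hc; apply h3; linarith)]
        rw [if_pos h2]
        have harg : (1:ℝ) + (2*(3*(u:ℝ) - 1) - 1)*(1 - 1) = 1 := by ring
        rw [harg, Ga_of_one_le m e P le_rfl, hg1]
    · rw [if_neg h2, if_neg (show ¬ ((u:ℝ) ≤ (2:ℝ)⁻¹) by intro hc; apply h2; linarith),
        if_neg h2]

lemma Zf_le {t : ℝ} (ht : t ≤ 2/3) : Zf m e P t xv y γ = y := if_pos ht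

include honer hg1 in
lemma Zf_t1 {t : ℝ} (ht : 1 ≤ t) : Zf m e P t xv y γ = P.d := by
  rw [Zf, if_neg (by intro hc; linarith [hc]), mcl_of_one_le (by linarith : 1 ≤ 3*t - 2),
    Ga_of_one_le m e P le_rfl, hg1, honer]

end WVals

/-- Pairs that are `Good`. -/
def GPair (m : M → M → M) (e : M) (Vs : Set M) : Type u :=
  {ω : ↥Vs × (M × C(unitInterval, M)) // Good m e ↑ω.1 ω.2}

instance : TopologicalSpace (GPair m e Vs) :=
  instTopologicalSpaceSubtype

/-- The contraction operator on witness pairs. -/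
def C0E (P : PatchData m e Vs) (t : ℝ) (xv : ↥Vs) (w : M × C(unitInterval, M)) :
    M × C(unitInterval, M) :=
  (Zf m e P t xv w.1 w.2,
   if h : Continuous (fun u : unitInterval => Wf m e P t ↑u xv w.1 w.2) then
     ⟨fun u => Wf m e P t ↑u xv w.1 w.2, h⟩
   else ContinuousMap.const _ e)

section C0ESec

variable (hm : Continuous fun p : M × M => m p.1 p.2)
    (hassoc : ∀ a b c, m (m a b) c = m a (m b c))
    (hone : ∀ a, m e a = a) (honer : ∀ a, m a e = a)

include hm hassoc hone honer in
lemma contWf_fixed {t : ℝ} {xv : ↥Vs} {y : M} {γ : C(unitInterval, M)}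
    (hg0 : γ 0 = m ↑xv y) (hg1 : γ 1 = e) :
    Continuous (fun u : unitInterval => Wf m e P t ↑u xv y γ) :=
  contWf m e P hm hassoc hone honer continuous_const continuous_subtype_val
    continuous_const continuous_const continuous_const (fun _ => hg0) (fun _ => hg1)

include hm hassoc hone honer in
lemma C0E_wit {t : ℝ} {xv : ↥Vs} {w : M × C(unitInterval, M)}
    (hgood : Good m e ↑xv w) (u : unitInterval) :
    (C0E m e P t xv w).2 u = Wf m e P t ↑u xv w.1 w.2 := by
  rw [C0E]
  rw [dif_pos (contWf_fixed m e P hm hassoc hone honer hgood.1 hgood.2)]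
  rfl

include hm hassoc hone honer in
lemma C0E_zero {t : ℝ} {xv : ↥Vs} {w : M × C(unitInterval, M)}
    (ht : t ≤ 0) (hgood : Good m e ↑xv w) : C0E m e P t xv w = w := by
  refine Prod.ext ?_ ?_
  · exact Zf_le m e (by linarith)
  · refine ContinuousMap.ext fun u => ?_
    rw [C0E_wit m e P hm hassoc hone honer hgood]
    exact Wf_t0 m e hone hgood.1 ht u

include hm hassoc hone honer in
lemma C0E_one {t : ℝ} {xv : ↥Vs} {w : M × C(unitInterval, M)}
    (ht : 1 ≤ t) (hgood : Good m e ↑xv w) :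
    C0E m e P t xv w = sPt m e P hm hassoc hone honer xv := by
  refine Prod.ext ?_ ?_
  · exact Zf_t1 m e honer hgood.2 ht
  · refine ContinuousMap.ext fun u => ?_
    rw [C0E_wit m e P hm hassoc hone honer hgood]
    rw [Wf_t1 m e honer hgood.2 ht u]
    rfl

include hm hassoc hone honer in
lemma C0E_good {t : ℝ} {xv : ↥Vs} {w : M × C(unitInterval, M)}
    (ht : 0 ≤ t) (hgood : Good m e ↑xv w) :
    Good m e ↑xv (C0E m e P t xv w) := by
  constructor
  · rw [C0E_wit m e P hm hassoc hone honer hgood]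
    rw [show ((0 : unitInterval) : ℝ) = 0 from rfl]
    exact Wf_u0 m e hone ht
  · rw [C0E_wit m e P hm hassoc hone honer hgood]
    rw [show ((1 : unitInterval) : ℝ) = 1 from rfl]
    exact Wf_u1 m e hone hgood.2

include hm hassoc hone honer in
lemma cont_C0E :
    Continuous fun pq : ℝ × GPair m e Vs =>
      C0E m e P pq.1 pq.2.val.1 pq.2.val.2 := by
  have hxm : Continuous fun pq : ℝ × GPair m e Vs => pq.2.val.1 :=
    (continuous_subtype_val.comp continuous_snd).fst
  have hym : Continuous fun pq : ℝ × GPair m e Vs => pq.2.val.2.1 :=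
    (continuous_subtype_val.comp continuous_snd).snd.fst
  have hγm : Continuous fun pq : ℝ × GPair m e Vs => pq.2.val.2.2 :=
    (continuous_subtype_val.comp continuous_snd).snd.snd
  have hg0 : ∀ pq : ℝ × GPair m e Vs,
      (pq.2.val.2.2) 0 = m ↑(pq.2.val.1) pq.2.val.2.1 := fun pq => pq.2.prop.1
  have hg1 : ∀ pq : ℝ × GPair m e Vs, (pq.2.val.2.2) 1 = e := fun pq => pq.2.prop.2
  apply Continuous.prodMk
  · apply Continuous.if_le
    · exact hym
    · exact contGa m e P hm hassoc
        (continuous_mcl.comp ((continuous_const.mul continuous_fst).sub continuous_const))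
        hxm hym hγm hg0
    · exact continuous_fst
    · exact continuous_const
    · intro pq hpq
      rw [hpq, mcl_of_nonpos (by norm_num : 3*(2/3:ℝ) - 2 ≤ 0)]
      exact (Ga_of_nonpos m e P hone le_rfl _ _ _).symm
  · set WBig : C((ℝ × GPair m e Vs) × unitInterval, M) :=
      ⟨fun q => Wf m e P q.1.1 ↑q.2 q.1.2.val.1 q.1.2.val.2.1 q.1.2.val.2.2,
        contWf m e P hm hassoc hone honer (continuous_fst.comp continuous_fst)
          (continuous_subtype_val.comp continuous_snd)
          (hxm.comp continuous_fst) (hym.comp continuous_fst) (hγm.comp continuous_fst)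
          (fun q => hg0 q.1) (fun q => hg1 q.1)⟩ with hWB
    have key : ∀ pq : ℝ × GPair m e Vs,
        WBig.curry pq = (C0E m e P pq.1 pq.2.val.1 pq.2.val.2).2 := by
      intro pq
      rw [C0E]
      rw [dif_pos (contWf_fixed m e P hm hassoc hone honer (hg0 pq) (hg1 pq))]
      exact ContinuousMap.ext fun u => rfl
    exact WBig.curry.continuous.congr key

end C0ESec

end Patch

section ListAux

variable {ι : Type u} [LinearOrder ι]

lemma foldl_filter {β : Type*} {f : β → ι → β} {p : ι → Bool} :
    ∀ (l : List ι) (b : β), (∀ i ∈ l, p i = false → ∀ w, f w i = w) →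
      List.foldl f b l = List.foldl f b (l.filter p) := by
  intro l
  induction l with
  | nil => intro b _; rfl
  | cons i l ih =>
    intro b h
    cases hp : p i with
    | true =>
      rw [List.filter_cons, if_pos (by simp [hp])]
      exact ih (f b i) (fun j hj => h j (List.mem_cons_of_mem _ hj))
    | false =>
      rw [List.filter_cons, if_neg (by simp [hp])]
      rw [List.foldl_cons, h i (List.mem_cons_self) hp b]
      exact ih b (fun j hj => h j (List.mem_cons_of_mem _ hj))

lemma sort_filter_eq {s t : Finset ι} (hst : s ⊆ t) :
    (Finset.sort t (· ≤ ·)).filter (fun i => decide (i ∈ s)) = Finset.sort s (· ≤ ·) := by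
  apply fun hp h1 h2 => List.Perm.eq_of_pairwise' (r := (· ≤ · : ι → ι → Prop)) h1 h2 hp
  · apply List.perm_of_nodup_nodup_toFinset_eq
    · exact (Finset.sort_nodup t _).filter _
    · exact Finset.sort_nodup s _
    · ext i
      simp only [List.mem_toFinset, List.mem_filter, Finset.mem_sort, decide_eq_true_eq]
      exact ⟨fun h => h.2, fun h => ⟨hst h, h⟩⟩
  · exact (Finset.pairwise_sort t (· ≤ ·)).filter _
  · exact Finset.pairwise_sort s _

end ListAux

section Glue

variable {M : Type u} [TopologicalSpace M] (m : M → M → M) (e : M)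
variable {ι : Type u} [LinearOrder ι] (φ : PartitionOfUnity ι M Set.univ)
variable (PD : ∀ i : ι, PatchData m e {x : M | 0 < φ i x})
variable (hm : Continuous fun p : M × M => m p.1 p.2)
    (hassoc : ∀ a b c, m (m a b) c = m a (m b c))
    (hone : ∀ a, m e a = a) (honer : ∀ a, m a e = a)

/-- cumulative weight of the indices `≤ i`. -/
def Usum (i : ι) (x : M) : ℝ := ∑ᶠ j, if j ≤ i then φ j x else 0

lemma Usum_supp_fin (i : ι) (x : M) :
    (Function.support fun j => if j ≤ i then φ j x else 0).Finite := by
  apply Set.Finite.subset (φ.locallyFinite.point_finite x)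
  intro j hj
  simp only [Function.mem_support] at hj ⊢
  intro hc
  apply hj
  split_ifs
  · rw [show φ j x = 0 from by simpa [Function.mem_support] using hc]
  · rfl

lemma Usum_ge (i : ι) (x : M) {k : ι} (hk : k ≤ i) : φ k x ≤ Usum φ i x := by
  have h := single_le_finsum k (Usum_supp_fin φ i x)
    (fun j => by split_ifs; exacts [φ.nonneg j x, le_rfl])
  rwa [if_pos hk] at h

lemma Usum_eq_of_min {x : M} {k : ι} (hk : ∀ j, φ j x ≠ 0 → k ≤ j) :
    Usum φ k x = φ k x := by
  have h : ∀ j, j ≠ k → (if j ≤ k then φ j x else 0) = 0 := by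
    intro j hj
    split_ifs with hle
    · by_contra hc
      exact hj (le_antisymm hle (hk j hc))
    · rfl
  rw [Usum, finsum_eq_single _ k h, if_pos le_rfl]

lemma Usum_eq_sum {F : Finset ι} {x : M} (hx : ∀ j, φ j x ≠ 0 → j ∈ F) (i : ι) :
    Usum φ i x = ∑ j ∈ F, if j ≤ i then φ j x else 0 := by
  apply finsum_eq_sum_of_support_subset
  intro j hj
  simp only [Function.mem_support] at hj
  apply hx
  intro hc
  apply hj
  split_ifs
  · exact hc
  · rfl

/-- One gluing step of the section. -/
def Gstep (i : ι) (x : M) (w : M × C(unitInterval, M)) : M × C(unitInterval, M) :=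
  if h : 0 < φ i x ∧ 0 < Usum φ i x then
    (if 2/3 ≤ φ i x / Usum φ i x then
      sPt m e (PD i) hm hassoc hone honer ⟨x, h.1⟩
    else
      C0E m e (PD i) (max 0 (3 * (φ i x / Usum φ i x) - 1)) ⟨x, h.1⟩ w)
  else w

lemma Gstep_of_zero {i : ι} {x : M} (hφ : φ i x = 0) (w) :
    Gstep m e φ PD hm hassoc hone honer i x w = w := by
  rw [Gstep, dif_neg]
  intro hc
  rw [hφ] at hc
  exact lt_irrefl 0 hc.1

lemma Gstep_good {i : ι} {x : M} {w} (hgood : Good m e x w) :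
    Good m e x (Gstep m e φ PD hm hassoc hone honer i x w) := by
  rw [Gstep]
  split_ifs with h1 h2
  · exact sPt_good m e (PD i) hm hassoc hone honer ⟨x, h1.1⟩
  · exact C0E_good m e (PD i) hm hassoc hone honer (le_max_left _ _) hgood
  · exact hgood

lemma Gstep_erase {i : ι} {x : M} (h1 : 0 < φ i x) (h2 : 0 < Usum φ i x)
    (h3 : 2/3 ≤ φ i x / Usum φ i x) (w) :
    Gstep m e φ PD hm hassoc hone honer i x w
      = sPt m e (PD i) hm hassoc hone honer ⟨x, h1⟩ := by
  rw [Gstep, dif_pos ⟨h1, h2⟩, if_pos h3]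

lemma Gstep_eq_C0E {i : ι} {x : M} {w} (h1 : 0 < φ i x) (h2 : 0 < Usum φ i x)
    (hgood : Good m e x w) :
    Gstep m e φ PD hm hassoc hone honer i x w
      = C0E m e (PD i) (min 1 (max 0 (3 * (φ i x / Usum φ i x) - 1))) ⟨x, h1⟩ w := by
  rw [Gstep, dif_pos ⟨h1, h2⟩]
  by_cases hb : 2/3 ≤ φ i x / Usum φ i x
  · rw [if_pos hb]
    have h0 : (0:ℝ) ≤ 3 * (φ i x / Usum φ i x) - 1 := by linarith
    have h1' : (1:ℝ) ≤ 3 * (φ i x / Usum φ i x) - 1 := by linarith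
    rw [max_eq_right h0, min_eq_left h1',
      C0E_one m e (PD i) hm hassoc hone honer le_rfl hgood]
  · rw [if_neg hb]
    congr 1
    rw [min_eq_right]
    apply max_le (by norm_num)
    push_neg at hb
    linarith

lemma Gstep_eq_self {i : ι} {x : M} {w} (hgood : Good m e x w)
    (hlow : 3 * φ i x < Usum φ i x) :
    Gstep m e φ PD hm hassoc hone honer i x w = w := by
  rw [Gstep]
  split_ifs with h1 h2
  · exfalso
    rw [le_div_iff₀ h1.2] at h2
    linarith [φ.nonneg i x]
  · have hθ : φ i x / Usum φ i x < 1/3 := by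
      rw [div_lt_iff₀ h1.2]
      linarith
    rw [show max 0 (3 * (φ i x / Usum φ i x) - 1) = 0 from
      max_eq_left (by linarith)]
    exact C0E_zero m e (PD i) hm hassoc hone honer le_rfl hgood
  · rfl

/-- Pointwise finite index set. -/
def Sx (x : M) : Finset ι := (φ.locallyFinite.point_finite x).toFinset

lemma mem_Sx {i : ι} {x : M} : i ∈ Sx φ x ↔ φ i x ≠ 0 := by
  rw [Sx, Set.Finite.mem_toFinset]
  simp [Function.mem_support]

lemma Sx_nonempty (x : M) : (Sx φ x).Nonempty := by
  by_contra h
  rw [Finset.not_nonempty_iff_eq_empty] at h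
  have hz : ∀ i, φ i x = 0 := by
    intro i
    by_contra hc
    have := (mem_Sx φ).mpr hc
    rw [h] at this
    exact absurd this (Finset.notMem_empty i)
  have h1 := φ.sum_eq_one (Set.mem_univ x)
  rw [show (fun i => φ i x) = fun _ => (0:ℝ) from funext hz, finsum_zero] at h1
  exact one_ne_zero h1.symm

/-- the glued section (with junk values where undefined). -/
def sigmaF (x : M) : M × C(unitInterval, M) :=
  List.foldl (fun w i => Gstep m e φ PD hm hassoc hone honer i x w)
    (e, ContinuousMap.const _ e) (Finset.sort (Sx φ x) (· ≤ ·))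

lemma fold_good {x : M} : ∀ (l : List ι),
    (∀ i ∈ l, 0 < φ i x ∧ 0 < Usum φ i x) → ∀ w, Good m e x w →
      Good m e x (List.foldl (fun w i => Gstep m e φ PD hm hassoc hone honer i x w) w l) := by
  intro l
  induction l with
  | nil => intro _ w hw; exact hw
  | cons i l ih =>
    intro h w hw
    exact ih (fun j hj => h j (List.mem_cons_of_mem _ hj)) _
      (Gstep_good m e φ PD hm hassoc hone honer hw)

lemma sigmaF_good (x : M) : Good m e x (sigmaF m e φ PD hm hassoc hone honer x) := by
  have hne := Sx_nonempty φ x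
  set k := (Sx φ x).min' hne with hk
  have hkmem : k ∈ Finset.sort (Sx φ x) (· ≤ ·) :=
    (Finset.mem_sort _).mpr ((Sx φ x).min'_mem hne)
  obtain ⟨k', rest, hl⟩ := List.exists_cons_of_ne_nil (List.ne_nil_of_mem hkmem)
  -- the head is the least element
  have hk'mem : k' ∈ Sx φ x := (Finset.mem_sort (α := ι) (· ≤ ·)).mp
    (by rw [hl]; exact List.mem_cons_self)
  have hhead : k' = k := by
    have h2 : k ≤ k' := (Sx φ x).min'_le k' hk'mem
    have hs := Finset.pairwise_sort (Sx φ x) (· ≤ ·)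
    rw [hl] at hs
    rcases List.mem_cons.mp (hl ▸ hkmem) with h | h
    · exact h.symm
    · exact le_antisymm (List.rel_of_pairwise_cons hs h) h2
  have hactive : ∀ j, φ j x ≠ 0 → k' ≤ j := by
    intro j hj
    rw [hhead]
    exact (Sx φ x).min'_le j ((mem_Sx φ).mpr hj)
  have hkpos : 0 < φ k' x :=
    lt_of_le_of_ne (φ.nonneg k' x) (Ne.symm ((mem_Sx φ).mp hk'mem))
  have hUs : Usum φ k' x = φ k' x := Usum_eq_of_min φ hactive
  rw [sigmaF, hl, List.foldl_cons]
  rw [Gstep_erase m e φ PD hm hassoc hone honer hkpos (hUs ▸ hkpos)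
    (by rw [hUs, div_self (ne_of_gt hkpos)]; norm_num) _]
  apply fold_good
  · intro i hi
    have himem : i ∈ Sx φ x := (Finset.mem_sort (α := ι) (· ≤ ·)).mp
      (by rw [hl]; exact List.mem_cons_of_mem _ hi)
    have hipos : 0 < φ i x :=
      lt_of_le_of_ne (φ.nonneg i x) (Ne.symm ((mem_Sx φ).mp himem))
    refine ⟨hipos, lt_of_lt_of_le hipos (Usum_ge φ i x le_rfl)⟩
  · exact sPt_good m e (PD k') hm hassoc hone honer _

theorem cont_sigmaF : Continuous (sigmaF m e φ PD hm hassoc hone honer) := by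
  rw [continuous_iff_continuousAt]
  intro x₀
  classical
  obtain ⟨N₀, hN₀, hTfin⟩ := φ.locallyFinite x₀
  set F : Finset ι := hTfin.toFinset with hFdef
  have hF : ∀ x ∈ N₀, ∀ i, φ i x ≠ 0 → i ∈ F := by
    intro x hx i hi
    rw [hFdef, Set.Finite.mem_toFinset]
    exact ⟨x, by simpa [Function.mem_support] using hi, hx⟩
  set UF : ι → M → ℝ := fun i x => ∑ j ∈ F, if j ≤ i then φ j x else 0 with hUFdef
  have hUFc : ∀ i, Continuous (UF i) := by
    intro i
    apply continuous_finset_sum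
    intro j _
    by_cases h : j ≤ i
    · simpa [h] using (φ j).continuous
    · simpa [h] using (continuous_const : Continuous fun _ : M => (0:ℝ))
  have hUs_eq : ∀ x ∈ N₀, ∀ i, Usum φ i x = UF i x := fun x hx i =>
    Usum_eq_sum φ (hF x hx) i
  have hx₀N : x₀ ∈ N₀ := mem_of_mem_nhds hN₀
  have hne := Sx_nonempty φ x₀
  set k := (Sx φ x₀).min' hne with hkdef
  have hkpos : 0 < φ k x₀ :=
    lt_of_le_of_ne (φ.nonneg k x₀) (Ne.symm ((mem_Sx φ).mp ((Sx φ x₀).min'_mem hne)))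
  have hkF : k ∈ F := hF x₀ hx₀N k (ne_of_gt hkpos)
  have hkmin : ∀ j, φ j x₀ ≠ 0 → k ≤ j := fun j hj =>
    (Sx φ x₀).min'_le j ((mem_Sx φ).mpr hj)
  set UL : M → ℝ := fun x => ∑ j ∈ F, if j < k then φ j x else 0 with hULdef
  have hULc : Continuous UL := by
    apply continuous_finset_sum
    intro j _
    by_cases h : j < k
    · simpa [h] using (φ j).continuous
    · simpa [h] using (continuous_const : Continuous fun _ : M => (0:ℝ))
  have hULnn : ∀ x, 0 ≤ UL x := by
    intro x
    apply Finset.sum_nonneg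
    intro j _
    split_ifs
    · exact φ.nonneg j x
    · exact le_rfl
  have hUL0 : UL x₀ = 0 := by
    apply Finset.sum_eq_zero
    intro j _
    split_ifs with h
    · by_contra hc
      exact absurd (hkmin j (fun h0 => hc (by rw [h0]))) (not_le_of_gt h)
    · rfl
  set tb : Set M := N₀ ∩ {x | 2 * UL x < φ k x} with htbdef
  have htb𝓝 : tb ∈ 𝓝 x₀ := by
    apply Filter.inter_mem hN₀
    apply (isOpen_lt (continuous_const.mul hULc) (φ k).continuous).mem_nhds
    show 2 * UL x₀ < φ k x₀
    rw [hUL0]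
    simpa using hkpos
  have htbN : tb ⊆ N₀ := Set.inter_subset_left
  have hb1 : ∀ x ∈ tb, 0 < φ k x := by
    intro x hx
    have h0 : (0:ℝ) ≤ 2 * UL x := by
      have := hULnn x; linarith
    exact lt_of_le_of_lt h0 hx.2
  have hsplit : ∀ x, UF k x = UL x + φ k x := by
    intro x
    show (∑ j ∈ F, if j ≤ k then φ j x else 0)
        = (∑ j ∈ F, if j < k then φ j x else 0) + φ k x
    have hterm : ∀ j ∈ F, (if j ≤ k then φ j x else 0)
        = (if j < k then φ j x else 0) + (if j = k then φ j x else 0) := by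
      intro j _
      rcases lt_trichotomy j k with h | h | h
      · simp [le_of_lt h, h, ne_of_lt h]
      · simp [h]
      · simp [not_le_of_gt h, lt_asymm h, (ne_of_gt h : j ≠ k)]
    rw [Finset.sum_congr rfl hterm, Finset.sum_add_distrib,
      Finset.sum_ite_eq' F k (fun j => φ j x), if_pos hkF]
  have hb2 : ∀ x ∈ tb, 0 < Usum φ k x := by
    intro x hx
    rw [hUs_eq x (htbN hx) k, hsplit]
    have := hULnn x
    linarith [hb1 x hx]
  have hb3 : ∀ x ∈ tb, 2/3 ≤ φ k x / Usum φ k x := by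
    intro x hx
    rw [hUs_eq x (htbN hx) k, hsplit, le_div_iff₀ (by rw [← hsplit, ← hUs_eq x (htbN hx) k]; exact hb2 x hx)]
    have hx2 : 2 * UL x < φ k x := hx.2
    linarith
  have hkmemsort : k ∈ Finset.sort F (· ≤ ·) := (Finset.mem_sort _).mpr hkF
  obtain ⟨l₁, l₂, hdecomp⟩ := List.append_of_mem hkmemsort
  have hl₂gt : ∀ i ∈ l₂, k < i := by
    have hs := Finset.pairwise_sort F (· ≤ ·)
    have hn := Finset.sort_nodup F (· ≤ ·)
    rw [hdecomp] at hs hn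
    intro i hi
    have hle : k ≤ i :=
      (List.pairwise_cons.mp (List.pairwise_append.mp hs).2.1).1 i hi
    have hne' : k ≠ i := fun h =>
      (List.nodup_cons.mp (List.nodup_append.mp hn).2.1).1 (h ▸ hi)
    exact lt_of_le_of_ne hle hne'
  set g0 : M → M × C(unitInterval, M) := fun x =>
    if h : 0 < φ k x then sPt m e (PD k) hm hassoc hone honer ⟨x, h⟩
    else (e, ContinuousMap.const _ e) with hg0def
  have hg0cont : ContinuousOn g0 tb := by
    rw [continuousOn_iff_continuous_restrict]
    have hre : (tb.domRestrict g0)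
        = fun z : ↥tb => sPt m e (PD k) hm hassoc hone honer ⟨↑z, hb1 ↑z z.2⟩ := by
      funext z
      simp only [Set.domRestrict_apply, hg0def]
      rw [dif_pos (hb1 ↑z z.2)]
    rw [hre]
    exact (cont_sPt m e (PD k) hm hassoc hone honer).comp
      (Continuous.subtype_mk continuous_subtype_val _)
  have hg0good : ∀ x ∈ tb, Good m e x (g0 x) := by
    intro x hx
    simp only [hg0def]
    rw [dif_pos (hb1 x hx)]
    exact sPt_good m e (PD k) hm hassoc hone honer _
  -- the inductive gluing chain over the tail
  have chain : ∀ (l : List ι), (∀ i ∈ l, k < i) →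
      ∀ (g : M → M × C(unitInterval, M)) (t : Set M), t ∈ 𝓝 x₀ → t ⊆ tb →
        ContinuousOn g t → (∀ x ∈ t, Good m e x (g x)) →
        ∃ t', t' ∈ 𝓝 x₀ ∧ t' ⊆ tb ∧
          ContinuousOn (fun x => List.foldl
            (fun w i => Gstep m e φ PD hm hassoc hone honer i x w) (g x) l) t' ∧
          ∀ x ∈ t', Good m e x (List.foldl
            (fun w i => Gstep m e φ PD hm hassoc hone honer i x w) (g x) l) := by
    intro l
    induction l with
    | nil => intro _ g t h1 h2 h3 h4; exact ⟨t, h1, h2, h3, h4⟩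
    | cons i l ih =>
      intro hgt g t ht𝓝 htsub hc hgood
      simp only [List.foldl_cons]
      have hki : k < i := hgt i (List.mem_cons_self)
      have hUipos : ∀ x ∈ tb, 0 < Usum φ i x := fun x hx =>
        lt_of_lt_of_le (hb1 x hx) (Usum_ge φ i x (le_of_lt hki))
      by_cases hzero : φ i x₀ = 0
      · -- the step is eventually the identity
        set O : Set M := {x | 3 * φ i x < UF i x} with hOdef
        have hOopen : IsOpen O := isOpen_lt (continuous_const.mul (φ i).continuous) (hUFc i)
        have hx₀tb : x₀ ∈ tb := mem_of_mem_nhds htb𝓝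
        have hx₀O : x₀ ∈ O := by
          show 3 * φ i x₀ < UF i x₀
          rw [hzero, ← hUs_eq x₀ hx₀N i]
          simpa using hUipos x₀ hx₀tb
        have ht'𝓝 : t ∩ O ∈ 𝓝 x₀ := Filter.inter_mem ht𝓝 (hOopen.mem_nhds hx₀O)
        have hsub' : t ∩ O ⊆ tb := fun x hx => htsub hx.1
        have heq : ∀ x ∈ t ∩ O, Gstep m e φ PD hm hassoc hone honer i x (g x) = g x := by
          intro x hx
          apply Gstep_eq_self m e φ PD hm hassoc hone honer (hgood x hx.1)
          rw [hUs_eq x (htbN (hsub' hx)) i]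
          exact hx.2
        exact ih (fun j hj => hgt j (List.mem_cons_of_mem _ hj)) _ (t ∩ O) ht'𝓝 hsub'
          ((hc.mono Set.inter_subset_left).congr heq)
          (fun x hx => by rw [heq x hx]; exact hgood x hx.1)
      · have hipos : 0 < φ i x₀ := lt_of_le_of_ne (φ.nonneg i x₀) (Ne.symm hzero)
        set t' : Set M := t ∩ {x | 0 < φ i x} with ht'def
        have ht'𝓝 : t' ∈ 𝓝 x₀ := Filter.inter_mem ht𝓝
          ((isOpen_lt continuous_const (φ i).continuous).mem_nhds hipos)
        have hsub' : t' ⊆ tb := fun x hx => htsub hx.1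
        have hcont' : ContinuousOn
            (fun x => Gstep m e φ PD hm hassoc hone honer i x (g x)) t' := by
          rw [continuousOn_iff_continuous_restrict]
          set Gm : ↥t' → ℝ × GPair m e {x : M | 0 < φ i x} := fun z =>
            (min 1 (max 0 (3 * (φ i ↑z / Usum φ i ↑z) - 1)),
             ⟨(⟨↑z, z.2.2⟩, g ↑z), hgood ↑z z.2.1⟩) with hGmdef
          have hθ : Continuous fun z : ↥t' => φ i ↑z / Usum φ i ↑z := by
            have hre : (fun z : ↥t' => φ i ↑z / Usum φ i ↑z)
                = fun z : ↥t' => φ i ↑z / UF i ↑z := by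
              funext z
              rw [hUs_eq ↑z (htbN (hsub' z.2)) i]
            rw [hre]
            apply Continuous.div
            · exact (φ i).continuous.comp continuous_subtype_val
            · exact (hUFc i).comp continuous_subtype_val
            · intro z
              have := hUipos ↑z (hsub' z.2)
              rw [hUs_eq ↑z (htbN (hsub' z.2)) i] at this
              exact ne_of_gt this
          have hGmcont : Continuous Gm := by
            apply Continuous.prodMk
            · exact continuous_const.min (continuous_const.max
                ((continuous_const.mul hθ).sub continuous_const))
            · apply Continuous.subtype_mk
              exact (Continuous.subtype_mk continuous_subtype_val _).prodMk
                ((hc.mono Set.inter_subset_left).restrict)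
          have hre : t'.domRestrict (fun x => Gstep m e φ PD hm hassoc hone honer i x (g x))
              = (fun pq : ℝ × GPair m e {x : M | 0 < φ i x} =>
                  C0E m e (PD i) pq.1 pq.2.val.1 pq.2.val.2) ∘ Gm := by
            funext z
            simp only [Set.domRestrict_apply, Function.comp_apply, hGmdef]
            exact Gstep_eq_C0E m e φ PD hm hassoc hone honer z.2.2
              (hUipos ↑z (hsub' z.2)) (hgood ↑z z.2.1)
          rw [hre]
          exact (cont_C0E m e (PD i) hm hassoc hone honer).comp hGmcont
        exact ih (fun j hj => hgt j (List.mem_cons_of_mem _ hj)) _ t' ht'𝓝 hsub' hcont'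
          (fun x hx => Gstep_good m e φ PD hm hassoc hone honer (hgood x hx.1))
  obtain ⟨tf, htf𝓝, htfsub, htfcont, _⟩ :=
    chain l₂ hl₂gt g0 tb htb𝓝 (subset_refl _) hg0cont hg0good
  -- sigmaF agrees with the chain function on tb
  have hagree : ∀ x ∈ tb, sigmaF m e φ PD hm hassoc hone honer x
      = List.foldl (fun w i => Gstep m e φ PD hm hassoc hone honer i x w) (g0 x) l₂ := by
    intro x hx
    have hsx : Sx φ x ⊆ F := fun i hi => hF x (htbN hx) i ((mem_Sx φ).mp hi)
    have h1 : sigmaF m e φ PD hm hassoc hone honer x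
        = List.foldl (fun w i => Gstep m e φ PD hm hassoc hone honer i x w)
          (e, ContinuousMap.const _ e) (Finset.sort F (· ≤ ·)) := by
      rw [sigmaF, ← sort_filter_eq hsx]
      refine (foldl_filter (Finset.sort F (· ≤ ·)) _ ?_).symm
      intro j _ hj w
      apply Gstep_of_zero
      by_contra hc
      rw [decide_eq_false_iff_not] at hj
      exact hj ((mem_Sx φ).mpr hc)
    rw [h1, hdecomp, List.foldl_append, List.foldl_cons,
      Gstep_erase m e φ PD hm hassoc hone honer (hb1 x hx) (hb2 x hx) (hb3 x hx)]
    simp only [hg0def]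
    rw [dif_pos (hb1 x hx)]
  exact ContinuousAt.congr (htfcont.continuousAt htf𝓝)
    (Filter.eventuallyEq_of_mem htb𝓝 (fun x hx => (hagree x hx).symm))

end Glue

lemma pj0 {r : ℝ} (h : r ≤ 0) : Set.projIcc (0:ℝ) 1 zero_le_one r = 0 := by
  rw [Set.projIcc_of_le_left _ h]; rfl

lemma pj1 {r : ℝ} (h : 1 ≤ r) : Set.projIcc (0:ℝ) 1 zero_le_one r = 1 := by
  rw [Set.projIcc_of_right_le _ h]; rfl

end DoldGL

open DoldGL in
theorem dold_core {M : Type u} [TopologicalSpace M] (m : M → M → M) (e : M)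
    (hm : Continuous fun p : M × M => m p.1 p.2)
    (hassoc : ∀ a b c, m (m a b) c = m a (m b c))
    (hone : ∀ a, m e a = a) (honer : ∀ a, m a e = a)
    (hd : DoldSpace M)
    (hπ : ∀ x : M, ∃ y, Joined (m x y) e ∧ Joined (m y x) e) :
    ∃ ν : M → M, Continuous ν ∧ ∃ H : C(unitInterval × M, M),
      (∀ x, H (0, x) = m x (ν x)) ∧ (∀ x, H (1, x) = e) := by
  obtain ⟨ι, U, φ, hsub, hnull⟩ := hd
  letI : LinearOrder ι := IsWellOrder.linearOrder WellOrderingRel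
  have hPD : ∀ i : ι, PatchData m e {x : M | 0 < φ i x} := fun i => Classical.choice (by
    obtain ⟨c, Hc, h0, h1⟩ := hnull i
    obtain ⟨d, hp, hq⟩ := hπ c
    have hVU : ∀ x : M, 0 < φ i x → x ∈ U i := by
      intro x hx
      apply hsub i
      apply subset_tsupport
      simp only [Function.mem_support]
      exact ne_of_gt hx
    refine ⟨⟨d, c,
      ⟨fun rz => Hc (Set.projIcc 0 1 zero_le_one rz.1, ⟨↑rz.2, hVU _ rz.2.2⟩), ?_⟩,
      ?_, ?_, hp.somePath, hq.somePath⟩⟩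
    · exact Hc.continuous.comp
        (((continuous_projIcc (h := zero_le_one)).comp continuous_fst).prodMk
          (Continuous.subtype_mk (continuous_subtype_val.comp continuous_snd) _))
    · intro r hr xv
      show Hc (Set.projIcc 0 1 zero_le_one r, _) = _
      rw [pj0 hr, h0]
    · intro r hr xv
      show Hc (Set.projIcc 0 1 zero_le_one r, _) = _
      rw [pj1 hr, h1])
  refine ⟨fun x => (sigmaF m e φ hPD hm hassoc hone honer x).1,
    continuous_fst.comp (cont_sigmaF m e φ hPD hm hassoc hone honer), ?_⟩
  refine ⟨⟨fun p => ((sigmaF m e φ hPD hm hassoc hone honer p.2).2) p.1, ?_⟩, ?_, ?_⟩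
  · exact ContinuousEval.continuous_eval.comp
      ((continuous_snd.comp ((cont_sigmaF m e φ hPD hm hassoc hone honer).comp
        continuous_snd)).prodMk continuous_fst)
  · exact fun x => (sigmaF_good m e φ hPD hm hassoc hone honer x).1
  · exact fun x => (sigmaF_good m e φ hPD hm hassoc hone honer x).2

theorem dold_monoid_grouplike' (M : Type u) [Monoid M] [TopologicalSpace M]
    [ContinuousMul M] (hd : DoldSpace M)
    (hπ : ∀ x : M, ∃ y : M, Joined (x * y) 1 ∧ Joined (y * x) 1) :
    ∃ ν : M → M, Continuous ν ∧
      MapsHomotopic (fun x => x * ν x) (fun _ => (1 : M)) ∧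
      MapsHomotopic (fun x => ν x * x) (fun _ => (1 : M)) := by
  obtain ⟨νr, hνr, Hr, hr0, hr1⟩ :=
    dold_core (M := M) (fun a b => a * b) 1
      (by exact continuous_mul)
      (fun a b c => mul_assoc a b c) (fun a => one_mul a) (fun a => mul_one a) hd hπ
  obtain ⟨νl, hνl, Hl, hl0, hl1⟩ :=
    dold_core (M := M) (fun a b => b * a) 1
      (continuous_mul.comp (continuous_snd.prodMk continuous_fst))
      (fun a b c => (mul_assoc c b a).symm) (fun a => mul_one a) (fun a => one_mul a) hd
      (fun x => by obtain ⟨y, h1, h2⟩ := hπ x; exact ⟨y, h2, h1⟩)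
  refine ⟨νr, hνr, ⟨Hr, hr0, hr1⟩, ?_⟩
  -- the left homotopy, spliced from Hl, Hr
  refine ⟨⟨fun p =>
      if (↑p.1 : ℝ) ≤ 4⁻¹ then
        (Hl (Set.projIcc 0 1 zero_le_one (1 - 4*(↑p.1 : ℝ)), p.2) * νr p.2) * p.2
      else if (↑p.1 : ℝ) ≤ 2⁻¹ then
        (νl p.2 * Hr (Set.projIcc 0 1 zero_le_one (4*(↑p.1 : ℝ) - 1), p.2)) * p.2
      else Hl (Set.projIcc 0 1 zero_le_one (2*(↑p.1 : ℝ) - 1), p.2), ?_⟩, ?_, ?_⟩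
  · -- continuity
    have hcoe : Continuous fun p : unitInterval × M => (↑p.1 : ℝ) :=
      continuous_subtype_val.comp continuous_fst
    have hHl : ∀ {f : unitInterval × M → ℝ}, Continuous f →
        Continuous fun p : unitInterval × M =>
          Hl (Set.projIcc 0 1 zero_le_one (f p), p.2) := fun hf =>
      Hl.continuous.comp (((continuous_projIcc (h := zero_le_one)).comp hf).prodMk
        continuous_snd)
    have hHr : ∀ {f : unitInterval × M → ℝ}, Continuous f →
        Continuous fun p : unitInterval × M =>
          Hr (Set.projIcc 0 1 zero_le_one (f p), p.2) := fun hf =>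
      Hr.continuous.comp (((continuous_projIcc (h := zero_le_one)).comp hf).prodMk
        continuous_snd)
    apply Continuous.if_le
    · exact ((hHl (continuous_const.sub (continuous_const.mul hcoe))).mul
        (hνr.comp continuous_snd)).mul continuous_snd
    · apply Continuous.if_le
      · exact ((hνl.comp continuous_snd).mul
          (hHr ((continuous_const.mul hcoe).sub continuous_const))).mul continuous_snd
      · exact hHl ((continuous_const.mul hcoe).sub continuous_const)
      · exact hcoe
      · exact continuous_const
      · intro p hp
        rw [hp]
        rw [show 4*(2:ℝ)⁻¹ - 1 = 1 by norm_num, show 2*(2:ℝ)⁻¹ - 1 = 0 by norm_num,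
          DoldGL.pj1 le_rfl, DoldGL.pj0 le_rfl, hr1 p.2, hl0 p.2, mul_one]
    · exact hcoe
    · exact continuous_const
    · intro p hp
      rw [hp, if_pos (show (4:ℝ)⁻¹ ≤ 2⁻¹ by norm_num)]
      rw [show (1:ℝ) - 4*4⁻¹ = 0 by norm_num, show 4*(4:ℝ)⁻¹ - 1 = 0 by norm_num,
        DoldGL.pj0 le_rfl, hl0 p.2, hr0 p.2, mul_assoc (νl p.2) p.2 (νr p.2)]
  · -- value at time 0
    intro x
    show (if ((0 : unitInterval) : ℝ) ≤ 4⁻¹ then _ else _) = νr x * x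
    rw [if_pos (show ((0 : unitInterval) : ℝ) ≤ 4⁻¹ by norm_num)]
    rw [show (1:ℝ) - 4*((0 : unitInterval) : ℝ) = 1 by norm_num,
      DoldGL.pj1 le_rfl, hl1 x, one_mul]
  · -- value at time 1
    intro x
    show (if ((1 : unitInterval) : ℝ) ≤ 4⁻¹ then _ else _) = 1
    rw [if_neg (by norm_num), if_neg (by norm_num),
      show 2*((1 : unitInterval) : ℝ) - 1 = 1 by norm_num, DoldGL.pj1 le_rfl, hl1 x]

/-- If `M` is a well-pointed topological monoid whose underlying space is a Dold space
and `π₀(M)` is a group under the induced multiplication, then `M` is grouplike: it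
admits a continuous homotopy inversion `ν` with `x·ν(x)` and `ν(x)·x` homotopic to the
constant map at the unit. -/
theorem dold_monoid_grouplike (M : Type u) [Monoid M] [TopologicalSpace M]
    [ContinuousMul M] (hw : WellPointedMon M) (hd : DoldSpace M)
    (hπ : ∀ x : M, ∃ y : M, Joined (x * y) 1 ∧ Joined (y * x) 1) :
    ∃ ν : M → M, Continuous ν ∧
      MapsHomotopic (fun x => x * ν x) (fun _ => (1 : M)) ∧
      MapsHomotopic (fun x => ν x * x) (fun _ => (1 : M)) :=
  dold_monoid_grouplike' M hd hπ
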